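/- Let u be a vertex of a graph G with 0 ∉ σ_u(G). If ⊗^2 G admits perfect state transfer between (0,u) and (1,u) at time τ, then exp(−2iλτ) = −1 for every λ ∈ σ_u(G). -/

import Mathlib

open Matrix

lemma absLemma (z : ℂ) (h1 : ‖z‖ = 1) (h2 : ‖z - 1‖ = 2) : z = -1 := by
  have hn1 : Complex.normSq z = 1 := by
    have := congrArg (· ^ 2) h1
    simpa [Complex.sq_norm] using this
  have hn2 : Complex.normSq (z - 1) = 4 := by
    have := congrArg (· ^ 2) h2
    simp only [← Complex.sq_norm] ; rw [h2]; norm_num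
  have hre : z.re = -1 := by
    have e1 : z.re^2 + z.im^2 = 1 := by
      simpa [Complex.normSq_apply, sq] using hn1
    have e2 : (z.re - 1)^2 + z.im^2 = 4 := by
      simpa [Complex.normSq_apply, Complex.sub_re, Complex.sub_im, sq] using hn2
    nlinarith
  have him : z.im = 0 := by
    have e1 : z.re^2 + z.im^2 = 1 := by
      simpa [Complex.normSq_apply, sq] using hn1
    nlinarith
  exact Complex.ext (by simp [hre]) (by simp [him])

lemma sumLemma {ι : Type*} [Fintype ι] (p q : ι → ℝ) (hp : ∀ k, 0 ≤ p k)
    (hq : ∀ k, q k ≤ 1) (hsp : ∑ k, p k = 1) (hspq : 1 ≤ ∑ k, p k * q k) :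
    ∀ k, p k ≠ 0 → q k = 1 := by
  have h0 : ∑ k, p k * (1 - q k) = 0 := by
    have : ∑ k, p k * (1 - q k) = (∑ k, p k) - ∑ k, p k * q k := by
      rw [← Finset.sum_sub_distrib]; congr 1; ext k; ring
    rw [this, hsp]
    have hle : ∑ k, p k * q k ≤ 1 := by
      calc ∑ k, p k * q k ≤ ∑ k, p k := Finset.sum_le_sum (fun k _ => by nlinarith [hp k, hq k])
        _ = 1 := hsp
    linarith
  intro k hk
  have := (Finset.sum_eq_zero_iff_of_nonneg (fun k _ => by nlinarith [hp k, hq k])).mp h0 k (Finset.mem_univ k)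
  have hpk : 0 < p k := lt_of_le_of_ne (hp k) (Ne.symm hk)
  nlinarith



/-- The blow-up of `n` copies of `G`. -/
def SimpleGraph.blowup {V : Type*} (n : ℕ) (G : SimpleGraph V) : SimpleGraph (ZMod n × V) :=
  G.comap Prod.snd

instance {V : Type*} {n : ℕ} (G : SimpleGraph V) [h : DecidableRel G.Adj] :
    DecidableRel (G.blowup n).Adj := fun x y => h x.2 y.2

/-- `λ ∈ σ_u(G)` for the adjacency matrix `A`. -/
def SuppMem {V : Type*} [Fintype V] (A : Matrix V V ℝ) (lam : ℝ) (u : V) : Prop :=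
  ∃ x : V → ℝ, A.mulVec x = lam • x ∧ x u ≠ 0

/-- If `0 ∉ σ_u(G)` and `⊗² G` has perfect state transfer between `(0,u)` and `(1,u)` at
time `τ`, then `exp(−2iλτ) = −1` for every `λ ∈ σ_u(G)`. -/
theorem exp_eq_neg_one_of_blowup_pst {V : Type*} [Fintype V] [DecidableEq V]
    (G : SimpleGraph V) [DecidableRel G.Adj] (hG : G.Connected) (u : V) (τ : ℝ)
    (h0 : ¬ SuppMem (G.adjMatrix ℝ) 0 u)
    (hPST : ‖
      (NormedSpace.exp ((-(Complex.I * τ)) • (G.blowup 2).adjMatrix ℂ) (0, u) (1, u))‖ = 1) :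
    ∀ lam : ℝ, SuppMem (G.adjMatrix ℝ) lam u →
      Complex.exp (-2 * Complex.I * lam * τ) = -1 := by
  classical
  intro lam hlam
  set B : Matrix V V ℂ := G.adjMatrix ℂ with hBdef
  have hB : B.IsHermitian := by
    unfold Matrix.IsHermitian
    ext i j
    simp [hBdef, Matrix.conjTranspose_apply, SimpleGraph.adjMatrix_apply, G.adj_comm i j,
      apply_ite (star : ℂ → ℂ)]
  set U : Matrix V V ℂ := (Matrix.IsHermitian.eigenvectorUnitary hB : Matrix V V ℂ) with hUdef
  set μ : V → ℝ := hB.eigenvalues with hμdef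
  have hUU : U * star U = 1 := Unitary.mul_star_self_of_mem (Matrix.IsHermitian.eigenvectorUnitary hB).2
  have hUUs : star U * U = 1 := Unitary.star_mul_self_of_mem (Matrix.IsHermitian.eigenvectorUnitary hB).2
  have hspec : B = U * Matrix.diagonal (fun k => (μ k : ℂ)) * star U := by
    have := hB.spectral_theorem
    rw [this, Unitary.conjStarAlgAut_apply]
    rfl
  -- Step 1: the support membership gives an eigenvector-basis index
  have key : ∃ k, μ k = lam ∧ U u k ≠ 0 := by
    obtain ⟨x, hx, hxu⟩ := hlam
    set xc : V → ℂ := fun v => (x v : ℂ) with hxcdef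
    have hxc : B.mulVec xc = (lam : ℂ) • xc := by
      funext v
      have h1 : (B.mulVec xc) v = ((((G.adjMatrix ℝ).mulVec x) v : ℝ) : ℂ) := by
        simp only [Matrix.mulVec, dotProduct, Complex.ofReal_sum]
        refine Finset.sum_congr rfl fun y _ => ?_
        by_cases h : G.Adj v y <;> simp [h, hBdef, hxcdef]
      rw [h1, hx]
      simp [hxcdef]
    set c : V → ℂ := (star U).mulVec xc with hcdef
    have hUc : U.mulVec c = xc := by
      rw [hcdef, Matrix.mulVec_mulVec, hUU, Matrix.one_mulVec]
    have hdiagc : ∀ k, (μ k : ℂ) * c k = lam * c k := by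
      have e1 : U.mulVec ((Matrix.diagonal (fun k => (μ k : ℂ))).mulVec c)
          = U.mulVec ((lam : ℂ) • c) := by
        have : B.mulVec xc = U.mulVec ((Matrix.diagonal (fun k => (μ k : ℂ))).mulVec c) := by
          rw [hspec]
          rw [← Matrix.mulVec_mulVec, ← Matrix.mulVec_mulVec, hcdef]
        rw [← this, hxc, ← hUc, Matrix.mulVec_smul]
      have e2 : (Matrix.diagonal (fun k => (μ k : ℂ))).mulVec c = (lam : ℂ) • c := by
        have := congrArg (fun w => (star U).mulVec (U.mulVec w))
          (rfl : ((Matrix.diagonal (fun k => (μ k : ℂ))).mulVec c) = _)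
        calc (Matrix.diagonal (fun k => (μ k : ℂ))).mulVec c
            = (star U * U).mulVec ((Matrix.diagonal (fun k => (μ k : ℂ))).mulVec c) := by
              rw [hUUs, Matrix.one_mulVec]
          _ = (star U).mulVec (U.mulVec ((Matrix.diagonal (fun k => (μ k : ℂ))).mulVec c)) := by
              rw [← Matrix.mulVec_mulVec]
          _ = (star U).mulVec (U.mulVec ((lam : ℂ) • c)) := by rw [e1]
          _ = (star U * U).mulVec ((lam : ℂ) • c) := by rw [← Matrix.mulVec_mulVec]
          _ = (lam : ℂ) • c := by rw [hUUs, Matrix.one_mulVec]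
      intro k
      have := congrFun e2 k
      simpa [Matrix.mulVec_diagonal] using this
    have hxcu : xc u ≠ 0 := by
      simp [hxcdef, hxu]
    obtain ⟨k, hk⟩ : ∃ k, U u k * c k ≠ 0 := by
      by_contra hall
      push_neg at hall
      apply hxcu
      rw [← hUc]
      simp only [Matrix.mulVec, dotProduct]
      exact Finset.sum_eq_zero fun k _ => hall k
    have hck : c k ≠ 0 := fun h => hk (by rw [h, mul_zero])
    have hUuk : U u k ≠ 0 := fun h => hk (by rw [h, zero_mul])
    refine ⟨k, ?_, hUuk⟩
    have := hdiagc k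
    have : (μ k : ℂ) = (lam : ℂ) := by
      exact mul_right_cancel₀ hck this
    exact_mod_cast this
  -- Step 2: the matrix harmonics
  set r : ℝ := (Real.sqrt 2)⁻¹ with hrdef
  have hr2 : (r : ℂ) * (r : ℂ) = 1/2 := by
    have : Real.sqrt 2 * Real.sqrt 2 = 2 := Real.mul_self_sqrt (by norm_num)
    rw [hrdef]
    push_cast
    rw [← mul_inv]
    norm_cast
    rw [this]
    norm_num
  set H : Matrix (ZMod 2) (ZMod 2) ℂ :=
    Matrix.of (fun a b => if a = 1 ∧ b = 1 then -(r:ℂ) else (r:ℂ)) with hHdef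
  set d : ZMod 2 → ℂ := fun c => if c = 0 then 2 else 0 with hddef
  have hZsum : ∀ f : ZMod 2 → ℂ, ∑ c, f c = f 0 + f 1 := fun f => Fin.sum_univ_two f
  have hcases : ∀ a : ZMod 2, a = 0 ∨ a = 1 := by decide
  have hH00 : H 0 0 = (r:ℂ) := by simp [hHdef]
  have hH01 : H 0 1 = (r:ℂ) := by simp [hHdef]
  have hH10 : H 1 0 = (r:ℂ) := by simp [hHdef]
  have hH11 : H 1 1 = -(r:ℂ) := by simp [hHdef]
  have hHH : H * star H = 1 := by
    ext a b
    rw [Matrix.mul_apply, hZsum]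
    rcases hcases a with rfl | rfl <;> rcases hcases b with rfl | rfl <;>
      simp [Matrix.conjTranspose_apply, hH00, hH01, hH10, hH11, Matrix.one_apply] <;>
      linear_combination 2 * hr2
  -- Kronecker structure
  set W : Matrix (ZMod 2 × V) (ZMod 2 × V) ℂ := Matrix.kroneckerMap (· * ·) H U with hWdef
  have hWstar : star W = Matrix.kroneckerMap (· * ·) (star H) (star U) := by
    ext ⟨a, x⟩ ⟨b, y⟩
    simp [hWdef, Matrix.star_apply, Matrix.kroneckerMap_apply, star_mul', mul_comm]
  have hWW : W * star W = 1 := by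
    rw [hWstar, hWdef, ← Matrix.mul_kronecker_mul, hHH, hUU, Matrix.one_kronecker_one]
  have hWinv : W⁻¹ = star W := Matrix.inv_eq_right_inv hWW
  have hWunit : IsUnit W := ⟨⟨W, star W, hWW, mul_eq_one_comm.mp hWW⟩, rfl⟩
  set D : ZMod 2 × V → ℂ := fun p => d p.1 * (μ p.2 : ℂ) with hDdef
  have hMdecomp : (G.blowup 2).adjMatrix ℂ = W * Matrix.diagonal D * star W := by
    have hM : (G.blowup 2).adjMatrix ℂ
        = Matrix.kroneckerMap (· * ·) (Matrix.of fun _ _ => (1:ℂ)) B := by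
      ext ⟨a, x⟩ ⟨b, y⟩
      simp [SimpleGraph.adjMatrix_apply, SimpleGraph.blowup, SimpleGraph.comap_adj, Matrix.kroneckerMap_apply, hBdef]
      rfl
    have hJ : (Matrix.of fun _ _ => (1:ℂ)) = H * Matrix.diagonal d * star H := by
      ext a b
      rw [Matrix.mul_apply]
      have hterm : ∀ c, (H * Matrix.diagonal d) a c * (star H) c b
          = H a c * d c * star (H b c) := by
        intro c
        rw [Matrix.mul_diagonal, Matrix.star_apply]
      simp only [hterm]
      rw [hZsum]
      have ha0 : H a 0 = (r : ℂ) := by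
        rcases hcases a with rfl | rfl
        · exact hH00
        · exact hH10
      have hb0 : H b 0 = (r : ℂ) := by
        rcases hcases b with rfl | rfl
        · exact hH00
        · exact hH10
      simp only [hddef]
      have hr2' : (r:ℂ)^2 = 1/2 := by rw [sq]; exact hr2
      have hs2 : ((Real.sqrt 2 : ℝ) : ℂ)^2 = 2 := by
        norm_cast
        rw [Real.sq_sqrt] <;> norm_num
      norm_num [ha0, hb0, Complex.conj_ofReal]
      all_goals (ring_nf; simp [hr2', hs2])
      all_goals norm_num
    rw [hM, hJ, hspec]
    rw [show (H * Matrix.diagonal d * star H) = (H * Matrix.diagonal d) * star H from rfl,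
      show ((U * Matrix.diagonal fun k => ((μ k : ℂ))) * star U)
        = (U * Matrix.diagonal fun k => ((μ k : ℂ))) * star U from rfl]
    rw [Matrix.mul_kronecker_mul, Matrix.mul_kronecker_mul,
      Matrix.diagonal_kronecker_diagonal, hWstar, hWdef, hDdef]
  -- exponential
  set efn : ZMod 2 × V → ℂ := fun p => Complex.exp (-(Complex.I * τ) * D p) with hefndef
  have hexp : NormedSpace.exp ((-(Complex.I * (τ:ℂ))) • (G.blowup 2).adjMatrix ℂ)
      = W * Matrix.diagonal efn * star W := by
    have hsmul : (-(Complex.I * (τ:ℂ))) • (G.blowup 2).adjMatrix ℂ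
        = W * Matrix.diagonal (fun p => (-(Complex.I * (τ:ℂ))) * D p) * W⁻¹ := by
      rw [hMdecomp, hWinv]
      have hfun : (fun p => (-(Complex.I * (τ:ℂ))) * D p) = (-(Complex.I * (τ:ℂ))) • D := rfl
      rw [hfun, Matrix.diagonal_smul, Matrix.mul_smul, Matrix.smul_mul]
    rw [hsmul, Matrix.exp_conj W _ hWunit, Matrix.exp_diagonal, Pi.exp_def, hWinv]
    congr 1
    congr 1
    congr 1
    funext p
    rw [← Complex.exp_eq_exp_ℂ]
  -- entry value
  set Ek : V → ℂ := fun k => Complex.exp (-2 * Complex.I * (μ k : ℂ) * (τ : ℂ)) with hEkdef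
  set pp : V → ℝ := fun k => Complex.normSq (U u k) with hppdef
  have hentry : (W * Matrix.diagonal efn * star W) (0, u) (1, u)
      = ∑ k, (pp k : ℂ) * ((Ek k - 1) / 2) := by
    rw [Matrix.mul_apply]
    have hterm : ∀ p, (W * Matrix.diagonal efn) (0, u) p * (star W) p (1, u)
        = W (0, u) p * efn p * star (W (1, u) p) := by
      intro p; rw [Matrix.mul_diagonal, Matrix.star_apply]
    simp only [hterm]
    rw [Fintype.sum_prod_type, hZsum (fun c => ∑ k, W (0,u) (c,k) * efn (c,k) * star (W (1,u) (c,k))),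
      ← Finset.sum_add_distrib]
    refine Finset.sum_congr rfl fun k _ => ?_
    have he0 : efn (0, k) = Ek k := by
      simp only [hefndef, hDdef, hddef, hEkdef]
      norm_num
      congr 1
      ring
    have he1 : efn (1, k) = 1 := by
      simp only [hefndef, hDdef, hddef]
      rw [if_neg (by decide : ¬ ((1 : ZMod 2) = 0))]
      simp
    have hW00 : W (0,u) (0,k) = (r:ℂ) * U u k := by rw [hWdef, Matrix.kroneckerMap_apply, hH00]
    have hW01 : W (0,u) (1,k) = (r:ℂ) * U u k := by rw [hWdef, Matrix.kroneckerMap_apply, hH01]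
    have hW10 : W (1,u) (0,k) = (r:ℂ) * U u k := by rw [hWdef, Matrix.kroneckerMap_apply, hH10]
    have hW11 : W (1,u) (1,k) = -(r:ℂ) * U u k := by
      rw [hWdef, Matrix.kroneckerMap_apply, hH11]
    rw [hW00, hW01, hW10, hW11, he0, he1]
    simp only [star_mul', star_neg, Complex.star_def, Complex.conj_ofReal]
    have hmc : U u k * (starRingEnd ℂ) (U u k) = ((pp k : ℝ) : ℂ) := by
      rw [Complex.mul_conj, hppdef]
    linear_combination ((starRingEnd ℂ) (U u k) * U u k * (Ek k - 1)) * hr2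
      + ((Ek k - 1) / 2) * hmc
  -- probabilities
  have hp : ∀ k, 0 ≤ pp k := fun k => Complex.normSq_nonneg _
  have hsp : ∑ k, pp k = 1 := by
    have h1 : (U * star U) u u = 1 := by rw [hUU]; simp [Matrix.one_apply]
    rw [Matrix.mul_apply] at h1
    have h2 : ∀ k, U u k * (star U) k u = ((pp k : ℝ) : ℂ) := by
      intro k
      rw [Matrix.star_apply, Complex.star_def, Complex.mul_conj, hppdef]
    rw [Finset.sum_congr rfl (fun k _ => h2 k), ← Complex.ofReal_sum] at h1
    exact_mod_cast h1
  set q : V → ℝ := fun k => ‖Ek k - 1‖ / 2 with hqdef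
  have habsE : ∀ k, ‖Ek k‖ = 1 := by
    intro k
    have harg : (-2 * Complex.I * (μ k : ℂ) * (τ : ℂ)) = ((-2 * μ k * τ : ℝ) : ℂ) * Complex.I := by
      push_cast; ring
    rw [hEkdef]
    simp only [harg]
    exact Complex.norm_exp_ofReal_mul_I _
  have hq : ∀ k, q k ≤ 1 := by
    intro k
    have : ‖Ek k - 1‖ ≤ ‖Ek k‖ + ‖(1:ℂ)‖ := by
      simpa [sub_eq_add_neg] using norm_add_le (Ek k) (-1)
    rw [habsE k] at this
    simp only [hqdef]
    rw [norm_one] at this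
    linarith
  have hchain : 1 ≤ ∑ k, pp k * q k := by
    rw [hexp, hentry] at hPST
    have h2 : ‖∑ k, (pp k : ℂ) * ((Ek k - 1) / 2)‖ ≤ ∑ k, pp k * q k := by
      refine le_trans (norm_sum_le _ _) ?_
      refine Finset.sum_le_sum fun k _ => ?_
      rw [norm_mul, norm_div, Complex.norm_of_nonneg (hp k)]
      simp [hqdef]
    linarith [hPST ▸ h2]
  have hfin := sumLemma pp q hp hq hsp hchain
  obtain ⟨k, hk1, hk2⟩ := key
  have hpk : pp k ≠ 0 := fun h => hk2 (Complex.normSq_eq_zero.mp h)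
  have hqk := hfin k hpk
  have habs2 : ‖Ek k - 1‖ = 2 := by
    simp only [hqdef] at hqk
    linarith
  have hEkn : Ek k = -1 := absLemma (Ek k) (habsE k) habs2
  rw [← hk1]
  exact hEkn
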